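/- Let p, p̃ be tropical polynomials with extended Newton polytopes P and P̃. If H(P, P̃) ≤ ε (Hausdorff distance in ℝ^{d+1}), then for every x with ‖x‖ ≤ r, |p(x) − p̃(x)| ≤ ε·√(r² + 1). -/

import Mathlib

open Metric in
private lemma sup'_inner_le_aux {E : Type*} [NormedAddCommGroup E] [InnerProductSpace ℝ E]
    {ι κ : Type*} [Fintype ι] [Fintype κ] [Nonempty ι] [Nonempty κ]
    (w : E) (f : ι → E) (g : κ → E) {ε : ℝ}
    (hH : hausdorffDist (convexHull ℝ (Set.range f)) (convexHull ℝ (Set.range g)) ≤ ε) :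
    Finset.univ.sup' Finset.univ_nonempty (fun i => (inner ℝ (f i) w : ℝ)) ≤
      Finset.univ.sup' Finset.univ_nonempty (fun j => (inner ℝ (g j) w : ℝ)) + ε * ‖w‖ := by
  have hScpt : IsCompact (convexHull ℝ (Set.range f)) :=
    (Set.finite_range f).isCompact_convexHull ℝ
  have hTcpt : IsCompact (convexHull ℝ (Set.range g)) :=
    (Set.finite_range g).isCompact_convexHull ℝ
  have hTne : (convexHull ℝ (Set.range g)).Nonempty :=
    (Set.range_nonempty g).mono (subset_convexHull ℝ _)
  have hSne : (convexHull ℝ (Set.range f)).Nonempty :=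
    (Set.range_nonempty f).mono (subset_convexHull ℝ _)
  have hfin : EMetric.hausdorffEdist (convexHull ℝ (Set.range f))
      (convexHull ℝ (Set.range g)) ≠ ⊤ :=
    hausdorffEdist_ne_top_of_nonempty_of_bounded hSne hTne hScpt.isBounded hTcpt.isBounded
  -- the linear functional ⟪·, w⟫
  set L : E →ₗ[ℝ] ℝ :=
    { toFun := fun y => (inner ℝ y w : ℝ)
      map_add' := fun y z => inner_add_left y z w
      map_smul' := fun c y => real_inner_smul_left y w c } with hL
  apply Finset.sup'_le
  intro i _
  have hmem : f i ∈ convexHull ℝ (Set.range f) := subset_convexHull ℝ _ ⟨i, rfl⟩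
  have hinf : infDist (f i) (convexHull ℝ (Set.range g)) ≤ ε :=
    (infDist_le_hausdorffDist_of_mem hmem hfin).trans hH
  obtain ⟨z, hz, hdz⟩ := hTcpt.exists_infDist_eq_dist hTne (f i)
  have hdist : dist (f i) z ≤ ε := by rw [← hdz]; exact hinf
  have hLz : ∃ j : κ, (inner ℝ z w : ℝ) ≤ inner ℝ (g j) w := by
    have hconv : ConvexOn ℝ Set.univ L := L.convexOn convex_univ
    obtain ⟨y, ⟨j, rfl⟩, hy⟩ := hconv.exists_ge_of_mem_convexHull (Set.subset_univ _) hz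
    exact ⟨j, hy⟩
  obtain ⟨j, hj⟩ := hLz
  have hdiff : (inner ℝ (f i) w : ℝ) - inner ℝ z w ≤ ε * ‖w‖ := by
    have : (inner ℝ (f i) w : ℝ) - inner ℝ z w = inner ℝ (f i - z) w := by
      rw [inner_sub_left]
    rw [this]
    calc (inner ℝ (f i - z) w : ℝ) ≤ ‖f i - z‖ * ‖w‖ := real_inner_le_norm _ _
      _ ≤ ε * ‖w‖ := by
          apply mul_le_mul_of_nonneg_right _ (norm_nonneg w)
          rw [← dist_eq_norm]; exact hdist
  have hjle : (inner ℝ (g j) w : ℝ) ≤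
      Finset.univ.sup' Finset.univ_nonempty (fun j => (inner ℝ (g j) w : ℝ)) :=
    Finset.le_sup' (fun j => (inner ℝ (g j) w : ℝ)) (Finset.mem_univ j)
  linarith

/-- If the Hausdorff distance between the extended Newton polytopes of two tropical
polynomials is at most `ε`, then for every `x` with `‖x‖ ≤ r`,
`|p x - p̃ x| ≤ ε · √(r² + 1)`. -/
theorem tropical_approx_of_hausdorffDist_le {d n m : ℕ} (r ε : ℝ)
    (a : Fin (n + 1) → EuclideanSpace ℝ (Fin d)) (b : Fin (n + 1) → ℝ)
    (c : Fin (m + 1) → EuclideanSpace ℝ (Fin d)) (e : Fin (m + 1) → ℝ)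
    (hH : Metric.hausdorffDist
        (convexHull ℝ (Set.range fun i =>
          ((WithLp.equiv 2 (EuclideanSpace ℝ (Fin d) × ℝ)).symm (a i, b i))))
        (convexHull ℝ (Set.range fun j =>
          ((WithLp.equiv 2 (EuclideanSpace ℝ (Fin d) × ℝ)).symm (c j, e j)))) ≤ ε) :
    ∀ x : EuclideanSpace ℝ (Fin d), ‖x‖ ≤ r →
      |Finset.univ.sup' Finset.univ_nonempty (fun i => (inner ℝ (a i) x : ℝ) + b i) -
          Finset.univ.sup' Finset.univ_nonempty (fun j => (inner ℝ (c j) x : ℝ) + e j)| ≤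
        ε * Real.sqrt (r ^ 2 + 1) := by
  intro x hx
  have hε : 0 ≤ ε := le_trans Metric.hausdorffDist_nonneg hH
  set w : WithLp 2 (EuclideanSpace ℝ (Fin d) × ℝ) :=
    (WithLp.equiv 2 (EuclideanSpace ℝ (Fin d) × ℝ)).symm (x, 1) with hw
  set F : Fin (n + 1) → WithLp 2 (EuclideanSpace ℝ (Fin d) × ℝ) :=
    fun i => (WithLp.equiv 2 (EuclideanSpace ℝ (Fin d) × ℝ)).symm (a i, b i) with hF
  set G : Fin (m + 1) → WithLp 2 (EuclideanSpace ℝ (Fin d) × ℝ) :=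
    fun j => (WithLp.equiv 2 (EuclideanSpace ℝ (Fin d) × ℝ)).symm (c j, e j) with hG
  have hFw : ∀ i, (inner ℝ (F i) w : ℝ) = inner ℝ (a i) x + b i := by
    intro i
    rw [WithLp.prod_inner_apply]
    simp [hF, hw, RCLike.inner_apply]
  have hGw : ∀ j, (inner ℝ (G j) w : ℝ) = inner ℝ (c j) x + e j := by
    intro j
    rw [WithLp.prod_inner_apply]
    simp [hG, hw, RCLike.inner_apply]
  have hnormw : ‖w‖ ≤ Real.sqrt (r ^ 2 + 1) := by
    rw [WithLp.prod_norm_eq_of_L2]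
    apply Real.sqrt_le_sqrt
    have h1 : ‖w.fst‖ = ‖x‖ := rfl
    have h2 : ‖w.snd‖ = 1 := by simp [hw]
    rw [h1, h2]
    have hr : 0 ≤ r := le_trans (norm_nonneg x) hx
    nlinarith [norm_nonneg x]
  have key1 := sup'_inner_le_aux w F G hH
  have hH' : Metric.hausdorffDist (convexHull ℝ (Set.range G)) (convexHull ℝ (Set.range F)) ≤ ε := by
    rwa [Metric.hausdorffDist_comm]
  have key2 := sup'_inner_le_aux w G F hH'
  have hεw : ε * ‖w‖ ≤ ε * Real.sqrt (r ^ 2 + 1) :=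
    mul_le_mul_of_nonneg_left hnormw hε
  simp only [hFw] at key1 key2
  simp only [hGw] at key1 key2
  rw [abs_sub_le_iff]
  constructor <;> linarith
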